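/- arXiv:1408.1374 — 3 statements merged into one kernel-verified Lean document; each statement's English description precedes it below -/
import Mathlib

section
/- Let p be a prime, z ∈ ℤ_p, and k ≥ 0 an integer. Then the Haar volume of the set {(x, y) ∈ ℤ_p² : p^k divides xy − z} is at most (k+1) · p^{−k}. -/
open MeasureTheory
open scoped ENNReal

/-- The Borel σ-algebra on the `p`-adic integers. -/
noncomputable instance padicMeasurableSpace (p : ℕ) [Fact p.Prime] :
    MeasurableSpace ℤ_[p] := borel _

instance padicBorelSpace (p : ℕ) [Fact p.Prime] : BorelSpace ℤ_[p] := ⟨rfl⟩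

/-- The Haar measure on `ℤ_p`, normalized so that `vol (ℤ_p) = 1`. -/
noncomputable def padicHaar (p : ℕ) [Fact p.Prime] : Measure ℤ_[p] :=
  Measure.addHaarMeasure
    ⟨⟨Set.univ, isCompact_univ⟩, by rw [interior_univ]; exact Set.univ_nonempty⟩


variable (p : ℕ) [Fact p.Prime]

lemma padicHaar_univ : padicHaar p Set.univ = 1 := Measure.addHaarMeasure_self
instance : IsFiniteMeasure (padicHaar p) :=
  ⟨by rw [show (padicHaar p) Set.univ = 1 from padicHaar_univ p]; norm_num⟩
instance : (padicHaar p).IsAddLeftInvariant := by unfold padicHaar; infer_instance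
instance : (padicHaar p).Regular := by unfold padicHaar; infer_instance

lemma padic_dvd_iff_norm (m : ℕ) (x : ℤ_[p]) :
    (p : ℤ_[p]) ^ m ∣ x ↔ ‖x‖ ≤ (p : ℝ) ^ (-m : ℤ) := by
  rw [PadicInt.norm_le_pow_iff_mem_span_pow, Ideal.mem_span_singleton]

lemma padic_dvd_closed (m : ℕ) : IsClosed {x : ℤ_[p] | (p : ℤ_[p]) ^ m ∣ x} := by
  have : {x : ℤ_[p] | (p : ℤ_[p]) ^ m ∣ x} = (fun x : ℤ_[p] => ‖x‖) ⁻¹' Set.Iic ((p:ℝ) ^ (-m:ℤ)) := by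
    ext x; simp [padic_dvd_iff_norm]
  rw [this]
  exact IsClosed.preimage continuous_norm isClosed_Iic

lemma padicHaar_dvd (m : ℕ) :
    padicHaar p {x : ℤ_[p] | (p : ℤ_[p]) ^ m ∣ x} = ((p : ℝ≥0∞) ^ m)⁻¹ := by
  classical
  set D := {x : ℤ_[p] | (p : ℤ_[p]) ^ m ∣ x} with hD
  have hpm : (0 : ℕ) < p ^ m := pow_pos (Fact.out (p := p.Prime)).pos m
  haveI : NeZero (p ^ m) := ⟨hpm.ne'⟩
  set f : ZMod (p ^ m) → Set ℤ_[p] := fun c => ((-(c.val : ℤ_[p])) + ·) ⁻¹' D with hf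
  have key : ∀ c x, x ∈ f c ↔ PadicInt.toZModPow m x = c := by
    intro c x
    have : x ∈ f c ↔ (p : ℤ_[p]) ^ m ∣ (-(c.val : ℤ_[p]) + x) := Iff.rfl
    rw [this, ← Ideal.mem_span_singleton, ← PadicInt.ker_toZModPow, RingHom.mem_ker,
      map_add, map_neg, map_natCast, ZMod.natCast_zmod_val, neg_add_eq_zero]
    exact eq_comm
  have hunion : (⋃ c, f c) = Set.univ := by
    ext x; simp only [Set.mem_iUnion, Set.mem_univ, iff_true]
    exact ⟨PadicInt.toZModPow m x, (key _ _).2 rfl⟩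
  have hdisj : Pairwise (Function.onFun Disjoint f) := by
    intro a b hab
    refine Set.disjoint_left.2 fun x hxa hxb => hab ?_
    rw [← (key a x).1 hxa, (key b x).1 hxb]
  have hDm : MeasurableSet D := (padic_dvd_closed p m).measurableSet
  have hfm : ∀ c, MeasurableSet (f c) :=
    fun c => hDm.preimage (measurable_const_add _)
  have hfme : ∀ c, padicHaar p (f c) = padicHaar p D :=
    fun c => measure_preimage_add _ _ _
  have h1 : (1 : ℝ≥0∞) = (p ^ m : ℕ) * padicHaar p D := by
    rw [← padicHaar_univ p, ← hunion, measure_iUnion hdisj hfm, tsum_fintype]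
    simp only [hfme, Finset.sum_const, Finset.card_univ, ZMod.card, nsmul_eq_mul]
  have hne : ((p ^ m : ℕ) : ℝ≥0∞) ≠ 0 := by exact_mod_cast hpm.ne'
  have hnt : ((p ^ m : ℕ) : ℝ≥0∞) ≠ ∞ := ENNReal.natCast_ne_top _
  calc padicHaar p D = ((p ^ m : ℕ) : ℝ≥0∞)⁻¹ * (((p ^ m : ℕ) : ℝ≥0∞) * padicHaar p D) := by
        rw [← mul_assoc, ENNReal.inv_mul_cancel hne hnt, one_mul]
    _ = ((p : ℝ≥0∞) ^ m)⁻¹ := by rw [← h1, mul_one]; norm_cast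

lemma padic_section_bound (j k : ℕ) (hj : j ≤ k) (x z : ℤ_[p])
    (hx : ¬ (p : ℤ_[p]) ^ (j + 1) ∣ x) :
    padicHaar p {y : ℤ_[p] | (p : ℤ_[p]) ^ k ∣ x * y - z} ≤ ((p : ℝ≥0∞) ^ (k - j))⁻¹ := by
  rcases Set.eq_empty_or_nonempty {y : ℤ_[p] | (p : ℤ_[p]) ^ k ∣ x * y - z} with h | ⟨y0, hy0⟩
  · rw [h]; simp
  · have hp1 : (1 : ℝ) < p := by exact_mod_cast (Fact.out (p := p.Prime)).one_lt
    have hppos : (0 : ℝ) < p := by linarith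
    have hxn : (p : ℝ) ^ (-(j : ℤ)) ≤ ‖x‖ := by
      rw [padic_dvd_iff_norm, PadicInt.norm_le_pow_iff_norm_lt_pow_add_one] at hx
      push_neg at hx
      have : (-(((j:ℕ) + 1 : ℕ) : ℤ) + 1) = -(j : ℤ) := by push_cast; ring
      rwa [this] at hx
    have hsub : {y : ℤ_[p] | (p : ℤ_[p]) ^ k ∣ x * y - z} ⊆
        ((-y0) + ·) ⁻¹' {w : ℤ_[p] | (p : ℤ_[p]) ^ (k - j) ∣ w} := by
      intro y hy
      have hdvd : (p : ℤ_[p]) ^ k ∣ x * (y - y0) := by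
        have := dvd_sub hy hy0
        have e : x * y - z - (x * y0 - z) = x * (y - y0) := by ring
        rwa [e] at this
      rw [padic_dvd_iff_norm, norm_mul] at hdvd
      show (p : ℤ_[p]) ^ (k - j) ∣ (-y0 + y)
      rw [padic_dvd_iff_norm, neg_add_eq_sub]
      have h2 : (p : ℝ) ^ (-(j:ℤ)) * ‖y - y0‖ ≤ (p:ℝ) ^ (-(k:ℤ)) :=
        le_trans (mul_le_mul_of_nonneg_right hxn (norm_nonneg _)) hdvd
      have h3 : (-(↑(k - j) : ℤ)) = -(k : ℤ) + j := by omega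
      rw [h3, zpow_add₀ (ne_of_gt hppos)]
      have h4 : (0:ℝ) < (p:ℝ) ^ (-(j:ℤ)) := zpow_pos hppos _
      rw [zpow_natCast]
      calc ‖y - y0‖ = ((p:ℝ) ^ (-(j:ℤ)) * ‖y - y0‖) * ((p:ℝ)^(-(j:ℤ)))⁻¹ := by
            field_simp
        _ ≤ (p:ℝ) ^ (-(k:ℤ)) * ((p:ℝ)^(-(j:ℤ)))⁻¹ := by
            apply mul_le_mul_of_nonneg_right h2 (by positivity)
        _ = (p:ℝ) ^ (-(k:ℤ)) * (p:ℝ) ^ (j:ℕ) := by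
            rw [← zpow_neg, neg_neg, zpow_natCast]
    calc padicHaar p {y : ℤ_[p] | (p : ℤ_[p]) ^ k ∣ x * y - z}
        ≤ padicHaar p (((-y0) + ·) ⁻¹' {w : ℤ_[p] | (p : ℤ_[p]) ^ (k - j) ∣ w}) :=
          measure_mono hsub
      _ = padicHaar p {w : ℤ_[p] | (p : ℤ_[p]) ^ (k - j) ∣ w} := measure_preimage_add _ _ _
      _ = ((p : ℝ≥0∞) ^ (k - j))⁻¹ := padicHaar_dvd p _

/-- For a prime `p`, `z ∈ ℤ_p` and `k ≥ 0`, the Haar volume of the set of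
`(x, y) ∈ ℤ_p²` with `p^k ∣ x*y - z` is at most `(k+1) p^{-k}`. -/
theorem stmt13 (p : ℕ) [Fact p.Prime] (z : ℤ_[p]) (k : ℕ) :
    ((padicHaar p).prod (padicHaar p))
      {v : ℤ_[p] × ℤ_[p] | (p : ℤ_[p]) ^ k ∣ v.1 * v.2 - z}
      ≤ ((k : ℝ≥0∞) + 1) * ((p : ℝ≥0∞) ^ k)⁻¹ := by
  classical
  set μ := padicHaar p with hμ
  set S := {v : ℤ_[p] × ℤ_[p] | (p : ℤ_[p]) ^ k ∣ v.1 * v.2 - z} with hS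
  have hSclosed : IsClosed S := by
    have : S = (fun v : ℤ_[p] × ℤ_[p] => v.1 * v.2 - z) ⁻¹' {w | (p : ℤ_[p]) ^ k ∣ w} := rfl
    rw [this]
    exact (padic_dvd_closed p k).preimage (by fun_prop)
  set D : ℕ → Set ℤ_[p] := fun m => {x : ℤ_[p] | (p : ℤ_[p]) ^ m ∣ x} with hD
  have hDmeas : ∀ m, MeasurableSet (D m) := fun m => (padic_dvd_closed p m).measurableSet
  set T : ℕ → Set (ℤ_[p] × ℤ_[p]) := fun j =>
    if j = k then (D k) ×ˢ (Set.univ : Set ℤ_[p])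
    else ((D j \ D (j + 1)) ×ˢ (Set.univ : Set ℤ_[p])) ∩ S with hT
  have hppos : 0 < p := (Fact.out (p := p.Prime)).pos
  have hcover : S ⊆ ⋃ j ∈ Finset.range (k + 1), T j := by
    intro v hv
    by_cases hk : (p : ℤ_[p]) ^ k ∣ v.1
    · refine Set.mem_biUnion (Finset.self_mem_range_succ k) ?_
      have : T k = (D k) ×ˢ (Set.univ : Set ℤ_[p]) := if_pos rfl
      rw [this]
      exact Set.mk_mem_prod hk (Set.mem_univ _)
    · set j := Nat.findGreatest (fun j => (p : ℤ_[p]) ^ j ∣ v.1) k with hj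
      have hj1 : (p : ℤ_[p]) ^ j ∣ v.1 :=
        Nat.findGreatest_spec (P := fun j => (p : ℤ_[p]) ^ j ∣ v.1) (Nat.zero_le k) (by simp)
      have hjle : j ≤ k := Nat.findGreatest_le k
      have hjlt : j < k := lt_of_le_of_ne hjle (by
        intro h; rw [h] at hj1; exact hk hj1)
      have hnd : ¬ (p : ℤ_[p]) ^ (j + 1) ∣ v.1 :=
        Nat.findGreatest_is_greatest (Nat.lt_succ_self j) hjlt
      refine Set.mem_biUnion (Finset.mem_range.2 (Nat.lt_succ_of_lt hjlt)) ?_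
      have : T j = ((D j \ D (j + 1)) ×ˢ (Set.univ : Set ℤ_[p])) ∩ S := by
        exact if_neg (Nat.ne_of_lt hjlt)
      rw [this]
      exact ⟨Set.mk_mem_prod ⟨hj1, hnd⟩ (Set.mem_univ _), hv⟩
  have hTbound : ∀ j ∈ Finset.range (k + 1), μ.prod μ (T j) ≤ ((p : ℝ≥0∞) ^ k)⁻¹ := by
    intro j hjmem
    by_cases hjk : j = k
    · have : T j = (D k) ×ˢ (Set.univ : Set ℤ_[p]) := by rw [hjk]; exact if_pos rfl
      rw [this]
      rw [Measure.prod_prod, hμ, padicHaar_dvd, padicHaar_univ, mul_one]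
    · have hjk' : j < k := lt_of_le_of_ne (Nat.lt_succ_iff.1 (Finset.mem_range.1 hjmem)) hjk
      have hTj : T j = ((D j \ D (j + 1)) ×ˢ (Set.univ : Set ℤ_[p])) ∩ S := by
        exact if_neg hjk
      rw [hTj]
      set U := ((D j \ D (j + 1)) ×ˢ (Set.univ : Set ℤ_[p])) ∩ S with hU
      have hmeas : MeasurableSet U :=
        (((hDmeas j).diff (hDmeas (j + 1))).prod MeasurableSet.univ).inter
          hSclosed.measurableSet
      rw [Measure.prod_apply hmeas]
      have hpt : ∀ x, μ (Prod.mk x ⁻¹' U) ≤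
          (D j).indicator (fun _ => ((p : ℝ≥0∞) ^ (k - j))⁻¹) x := by
        intro x
        by_cases hxj : x ∈ D j \ D (j + 1)
        · have he : Prod.mk x ⁻¹' U = {y : ℤ_[p] | (p : ℤ_[p]) ^ k ∣ x * y - z} := by
            ext y
            simp only [hU, hS, Set.mem_preimage, Set.mem_inter_iff, Set.mem_prod,
              Set.mem_univ, and_true, Set.mem_setOf_eq]
            exact ⟨fun h => h.2, fun h => ⟨hxj, h⟩⟩
          rw [he, Set.indicator_of_mem hxj.1]
          exact padic_section_bound p j k (le_of_lt hjk') x z hxj.2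
        · have he : Prod.mk x ⁻¹' U = ∅ := by
            ext y
            simp only [hU, Set.mem_preimage, Set.mem_inter_iff, Set.mem_prod,
              Set.mem_univ, and_true, Set.mem_empty_iff_false, iff_false]
            exact fun h => hxj h.1
          rw [he, measure_empty]
          exact zero_le
      calc ∫⁻ x, μ (Prod.mk x ⁻¹' U) ∂μ
          ≤ ∫⁻ x, (D j).indicator (fun _ => ((p : ℝ≥0∞) ^ (k - j))⁻¹) x ∂μ :=
            lintegral_mono hpt
        _ = ((p : ℝ≥0∞) ^ (k - j))⁻¹ * μ (D j) := lintegral_indicator_const (hDmeas j) _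
        _ = ((p : ℝ≥0∞) ^ (k - j))⁻¹ * ((p : ℝ≥0∞) ^ j)⁻¹ := by
            rw [hμ, padicHaar_dvd]
        _ = ((p : ℝ≥0∞) ^ k)⁻¹ := by
            rw [← ENNReal.mul_inv (Or.inl (by positivity)) (Or.inl (ENNReal.pow_ne_top
              (ENNReal.natCast_ne_top p))), ← pow_add, Nat.sub_add_cancel (le_of_lt hjk')]
  calc μ.prod μ S ≤ μ.prod μ (⋃ j ∈ Finset.range (k + 1), T j) := measure_mono hcover
    _ ≤ ∑ j ∈ Finset.range (k + 1), μ.prod μ (T j) := measure_biUnion_finset_le _ _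
    _ ≤ ∑ _j ∈ Finset.range (k + 1), ((p : ℝ≥0∞) ^ k)⁻¹ := Finset.sum_le_sum hTbound
    _ = ((k : ℝ≥0∞) + 1) * ((p : ℝ≥0∞) ^ k)⁻¹ := by
        rw [Finset.sum_const, Finset.card_range, nsmul_eq_mul]
        norm_cast
end

section
/- Let p be a prime and let x₁₁, x₂₁, x₂₂ ∈ ℤ_p with x₁₁ ≠ 0 and x₂₂ ≠ 0. Then the ℤ_p-submodule of ℤ_p² spanned by the vectors v₁ = (x₁₁, 0) and v₂ = (x₂₁, x₂₂) is closed under the componentwise product of ℤ_p² if and only if x₁₁ divides x₂₁(x₂₁ − x₂₂) in ℤ_p. -/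
/-- Let `p` be a prime and `x₁₁, x₂₁, x₂₂ ∈ ℤ_p` with `x₁₁ ≠ 0` and `x₂₂ ≠ 0`.  The
`ℤ_p`-submodule of `ℤ_p²` spanned by `(x₁₁, 0)` and `(x₂₁, x₂₂)` is closed under the
componentwise product if and only if `x₁₁ ∣ x₂₁ (x₂₁ - x₂₂)` in `ℤ_p`. -/
theorem stmt17 (p : ℕ) [Fact p.Prime] (x11 x21 x22 : ℤ_[p])
    (h11 : x11 ≠ 0) (h22 : x22 ≠ 0) :
    (∀ u ∈ Submodule.span ℤ_[p] ({(x11, 0), (x21, x22)} : Set (ℤ_[p] × ℤ_[p])),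
      ∀ w ∈ Submodule.span ℤ_[p] ({(x11, 0), (x21, x22)} : Set (ℤ_[p] × ℤ_[p])),
        u * w ∈ Submodule.span ℤ_[p] ({(x11, 0), (x21, x22)} : Set (ℤ_[p] × ℤ_[p])))
    ↔ x11 ∣ x21 * (x21 - x22) := by
  set S : Set (ℤ_[p] × ℤ_[p]) := {(x11, 0), (x21, x22)} with hS
  set M := Submodule.span ℤ_[p] S with hM
  have hv1 : ((x11, 0) : ℤ_[p] × ℤ_[p]) ∈ M :=
    Submodule.subset_span (by simp [hS])
  have hv2 : ((x21, x22) : ℤ_[p] × ℤ_[p]) ∈ M :=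
    Submodule.subset_span (by simp [hS])
  constructor
  · intro h
    have := h _ hv2 _ hv2
    rw [Submodule.mem_span_pair] at this
    obtain ⟨a, b, hab⟩ := this
    rw [Prod.ext_iff] at hab
    obtain ⟨h1, h2⟩ := hab
    simp [Prod.smul_def, smul_eq_mul] at h1 h2
    have hb : b = x22 := h2.resolve_right h22
    subst hb
    exact ⟨a, by linear_combination -h1⟩
  · intro ⟨k, hk⟩
    -- products of generators lie in M
    have key : ∀ x ∈ S, ∀ y ∈ S, x * y ∈ M := by
      intro x hx y hy
      simp only [hS, Set.mem_insert_iff, Set.mem_singleton_iff] at hx hy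
      rcases hx with rfl | rfl <;> rcases hy with rfl | rfl
      · have : ((x11, 0) : ℤ_[p] × ℤ_[p]) * (x11, 0) = x11 • (x11, 0) := by
          simp [Prod.ext_iff, smul_eq_mul]
        rw [this]; exact M.smul_mem _ hv1
      · have : ((x11, 0) : ℤ_[p] × ℤ_[p]) * (x21, x22) = x21 • (x11, 0) := by
          simp [Prod.ext_iff, smul_eq_mul]; ring
        rw [this]; exact M.smul_mem _ hv1
      · have : ((x21, x22) : ℤ_[p] × ℤ_[p]) * (x11, 0) = x21 • (x11, 0) := by
          simp [Prod.ext_iff, smul_eq_mul]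
        rw [this]; exact M.smul_mem _ hv1
      · have : ((x21, x22) : ℤ_[p] × ℤ_[p]) * (x21, x22)
            = k • (x11, 0) + x22 • (x21, x22) := by
          simp [Prod.ext_iff, smul_eq_mul]
          linear_combination hk
        rw [this]
        exact M.add_mem (M.smul_mem _ hv1) (M.smul_mem _ hv2)
    intro u hu w hw
    induction hu using Submodule.span_induction with
    | mem x hx =>
      induction hw using Submodule.span_induction with
      | mem y hy => exact key x hx y hy
      | zero => simpa using M.zero_mem
      | add y z _ _ hy hz => rw [mul_add]; exact M.add_mem hy hz
      | smul c y _ hy => rw [mul_smul_comm]; exact M.smul_mem _ hy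
    | zero => simpa using M.zero_mem
    | add y z _ _ hy hz => rw [add_mul]; exact M.add_mem hy hz
    | smul c y _ hy => rw [smul_mul_assoc]; exact M.smul_mem _ hy
end

section
/- Let p be a prime and let k, l, r ≥ 0 be integers. Let μ_p(k;l;r) be the Haar volume of the set of (x₂₁, x₃₁, x₃₂) ∈ ℤ_p³ satisfying: p^k divides x₂₁² − x₂₁·p^l; p^k divides x₂₁(x₃₁ − x₃₂); p^l divides x₃₂² − x₃₂·p^r; and p^{k+l} divides p^l(x₃₁² − x₃₁·p^r) − x₂₁(x₃₂² − x₃₂·p^r). Then μ_p(k;l;r) ≤ 8 · p^{−7k/6} · p^{−l/6}. -/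
open MeasureTheory
open scoped ENNReal

namespace Stmt18Aux

variable {p : ℕ} [Fact p.Prime]

instance : (padicHaar p).IsAddHaarMeasure := by unfold padicHaar; infer_instance

lemma padicHaar_univ : padicHaar p Set.univ = 1 := Measure.addHaarMeasure_self

instance : IsFiniteMeasure (padicHaar p) := ⟨by rw [padicHaar_univ]; exact ENNReal.one_lt_top⟩

lemma p_ne_zero : (p : ℤ_[p]) ≠ 0 := PadicInt.prime_p.ne_zero

lemma pow_dvd_iff_le_val {x : ℤ_[p]} (hx : x ≠ 0) (n : ℕ) :
    (p : ℤ_[p]) ^ n ∣ x ↔ (n : ℤ) ≤ x.valuation := by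
  rw [Nat.cast_le, ← PadicInt.mem_span_pow_iff_le_valuation x hx, Ideal.mem_span_singleton]

lemma val_mul {x y : ℤ_[p]} (hx : x ≠ 0) (hy : y ≠ 0) :
    (x * y).valuation = x.valuation + y.valuation := by
  exact PadicInt.valuation_mul hx hy

/-- splitting: if `p^k ∣ a*b` and `i + j ≤ k + 1` then `p^i ∣ a` or `p^j ∣ b`. -/
lemma split_dvd {a b : ℤ_[p]} {k i j : ℕ} (h : (p : ℤ_[p]) ^ k ∣ a * b)
    (hij : i + j ≤ k + 1) : (p : ℤ_[p]) ^ i ∣ a ∨ (p : ℤ_[p]) ^ j ∣ b := by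
  rcases eq_or_ne a 0 with rfl | ha
  · exact Or.inl (dvd_zero _)
  rcases eq_or_ne b 0 with rfl | hb
  · exact Or.inr (dvd_zero _)
  have hab : a * b ≠ 0 := mul_ne_zero ha hb
  by_contra hc
  push_neg at hc
  rw [pow_dvd_iff_le_val ha, not_le] at hc
  rw [pow_dvd_iff_le_val hb, not_le] at hc
  rw [pow_dvd_iff_le_val hab, val_mul ha hb] at h
  obtain ⟨h1, h2⟩ := hc
  have := Int.natCast_nonneg a.valuation
  have := Int.natCast_nonneg b.valuation
  omega

lemma val_p_pow (l : ℕ) : ((p : ℤ_[p]) ^ l).valuation = l := by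
  have := PadicInt.valuation_p_pow_mul (p := p) l 1 one_ne_zero
  simpa [PadicInt.valuation_one] using this

/-- Claim A : quadratic divisibility forces membership in one of two small balls. -/
lemma claimA {x : ℤ_[p]} {k l : ℕ} (h : (p : ℤ_[p]) ^ k ∣ x * (x - (p : ℤ_[p]) ^ l)) :
    (p : ℤ_[p]) ^ (max ((k + 1) / 2) (k - l)) ∣ x ∨
      (p : ℤ_[p]) ^ (max ((k + 1) / 2) (k - l)) ∣ (x - (p : ℤ_[p]) ^ l) := by
  rcases eq_or_ne x 0 with rfl | ha
  · exact Or.inl (dvd_zero _)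
  rcases eq_or_ne (x - (p : ℤ_[p]) ^ l) 0 with hb0 | hb
  · exact Or.inr (hb0 ▸ dvd_zero _)
  have hpl : ((p : ℤ_[p]) ^ l) ≠ 0 := pow_ne_zero _ p_ne_zero
  rw [pow_dvd_iff_le_val (mul_ne_zero ha hb), val_mul ha hb] at h
  have hva := Int.natCast_nonneg x.valuation
  have hvb := Int.natCast_nonneg (x - (p : ℤ_[p]) ^ l).valuation
  have hmin : x.valuation ≤ l ∨ (x - (p : ℤ_[p]) ^ l).valuation ≤ l := by
    by_contra hcc
    push_neg at hcc
    have h1 : (p : ℤ_[p]) ^ (l + 1) ∣ x := (pow_dvd_iff_le_val ha _).2 (by omega)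
    have h2 : (p : ℤ_[p]) ^ (l + 1) ∣ (x - (p : ℤ_[p]) ^ l) :=
      (pow_dvd_iff_le_val hb _).2 (by omega)
    have h3 : (p : ℤ_[p]) ^ (l + 1) ∣ (p : ℤ_[p]) ^ l := by
      have := dvd_sub h1 h2
      simpa using this
    rw [pow_dvd_iff_le_val hpl, val_p_pow] at h3
    omega
  rcases le_total x.valuation ((x - (p : ℤ_[p]) ^ l).valuation) with hle | hle
  · refine Or.inr ((pow_dvd_iff_le_val hb _).2 ?_)
    push_cast [Nat.cast_max]
    omega
  · refine Or.inl ((pow_dvd_iff_le_val ha _).2 ?_)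
    push_cast [Nat.cast_max]
    omega

lemma dvd_iff_norm_le {x : ℤ_[p]} {n : ℕ} :
    (p : ℤ_[p]) ^ n ∣ x ↔ ‖x‖ ≤ (p : ℝ) ^ (-n : ℤ) := by
  rw [PadicInt.norm_le_pow_iff_mem_span_pow, Ideal.mem_span_singleton]

lemma measurableSet_dvd {α : Type*} [TopologicalSpace α] [MeasurableSpace α]
    [OpensMeasurableSpace α] {g : α → ℤ_[p]} (hg : Continuous g) (n : ℕ) :
    MeasurableSet {a | (p : ℤ_[p]) ^ n ∣ g a} := by
  have : {a | (p : ℤ_[p]) ^ n ∣ g a} = g ⁻¹' {y | ‖y‖ ≤ (p : ℝ) ^ (-n : ℤ)} := by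
    ext a; exact dvd_iff_norm_le
  rw [this]
  exact ((isClosed_le continuous_norm continuous_const).preimage hg).measurableSet

lemma padicHaar_ball_le (m : ℕ) :
    padicHaar p {x : ℤ_[p] | (p : ℤ_[p]) ^ m ∣ x} ≤ (((p : ℝ≥0∞)) ^ m)⁻¹ := by
  set μ := padicHaar p
  set B := {x : ℤ_[p] | (p : ℤ_[p]) ^ m ∣ x} with hB
  have hBm : MeasurableSet B := measurableSet_dvd continuous_id m
  rw [ENNReal.le_inv_iff_mul_le]
  have key : (∑ _j ∈ Finset.range (p ^ m), μ B) ≤ 1 := by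
    have heq : ∀ j : ℕ, μ ((fun x => ((j : ℤ_[p])) + x) ⁻¹' B) = μ B := fun j =>
      measure_preimage_add μ _ B
    calc (∑ _j ∈ Finset.range (p ^ m), μ B)
        = ∑ j ∈ Finset.range (p ^ m), μ ((fun x => ((j : ℤ_[p])) + x) ⁻¹' B) := by
          exact Finset.sum_congr rfl fun j _ => (heq j).symm
      _ = μ (⋃ j ∈ Finset.range (p ^ m), (fun x => ((j : ℤ_[p])) + x) ⁻¹' B) := by
          refine (measure_biUnion_finset ?_ ?_).symm
          · intro i hi j hj hij
            simp only [Finset.coe_range, Set.mem_Iio] at hi hj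
            refine Set.disjoint_left.2 fun x hxi hxj => ?_
            have h1 : (p : ℤ_[p]) ^ m ∣ ((i : ℤ_[p]) + x) := hxi
            have h2 : (p : ℤ_[p]) ^ m ∣ ((j : ℤ_[p]) + x) := hxj
            have h3 : (p : ℤ_[p]) ^ m ∣ (((i : ℤ) - (j : ℤ) : ℤ) : ℤ_[p]) := by
              have := dvd_sub h1 h2
              push_cast
              simpa using this
            rw [PadicInt.pow_p_dvd_int_iff] at h3
            have hpm' : ((p ^ m : ℕ) : ℤ) = (p : ℤ) ^ m := by push_cast; ring
            have hlt : |(i : ℤ) - (j : ℤ)| < (p : ℤ) ^ m := by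
              rw [abs_sub_lt_iff]; omega
            have hne : (i : ℤ) - (j : ℤ) ≠ 0 := by omega
            have hle := Int.le_of_dvd (abs_pos.2 hne) ((dvd_abs _ _).2 h3)
            exact absurd (hle.trans_lt hlt) (lt_irrefl _)
          · exact fun j _ => hBm.preimage (by fun_prop)
      _ ≤ μ Set.univ := measure_mono (Set.subset_univ _)
      _ = 1 := padicHaar_univ
  calc μ B * (p : ℝ≥0∞) ^ m = (p : ℝ≥0∞) ^ m * μ B := mul_comm _ _
    _ = (((p ^ m : ℕ) : ℝ≥0∞)) * μ B := by push_cast; ring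
    _ = ∑ _j ∈ Finset.range (p ^ m), μ B := by
        rw [Finset.sum_const, Finset.card_range, nsmul_eq_mul]
    _ ≤ 1 := key

lemma padicHaar_ball_center_le (c : ℤ_[p]) (m : ℕ) :
    padicHaar p {x : ℤ_[p] | (p : ℤ_[p]) ^ m ∣ x - c} ≤ (((p : ℝ≥0∞)) ^ m)⁻¹ := by
  have h : {x : ℤ_[p] | (p : ℤ_[p]) ^ m ∣ x - c}
      = (fun x => -c + x) ⁻¹' {x : ℤ_[p] | (p : ℤ_[p]) ^ m ∣ x} := by
    ext x
    simp only [Set.mem_setOf_eq, Set.mem_preimage, neg_add_eq_sub]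
  rw [h, measure_preimage_add]
  exact padicHaar_ball_le m

lemma two_ball (c₁ c₂ : ℤ_[p]) (m : ℕ) (S : Set ℤ_[p])
    (hS : ∀ x ∈ S, (p : ℤ_[p]) ^ m ∣ x - c₁ ∨ (p : ℤ_[p]) ^ m ∣ x - c₂) :
    padicHaar p S ≤ 2 * (((p : ℝ≥0∞)) ^ m)⁻¹ := by
  have hsub : S ⊆ {x : ℤ_[p] | (p : ℤ_[p]) ^ m ∣ x - c₁} ∪
      {x : ℤ_[p] | (p : ℤ_[p]) ^ m ∣ x - c₂} := fun x hx => hS x hx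
  calc padicHaar p S ≤ padicHaar p ({x : ℤ_[p] | (p : ℤ_[p]) ^ m ∣ x - c₁} ∪
        {x : ℤ_[p] | (p : ℤ_[p]) ^ m ∣ x - c₂}) := measure_mono hsub
    _ ≤ padicHaar p {x : ℤ_[p] | (p : ℤ_[p]) ^ m ∣ x - c₁} +
        padicHaar p {x : ℤ_[p] | (p : ℤ_[p]) ^ m ∣ x - c₂} := measure_union_le _ _
    _ ≤ 2 * (((p : ℝ≥0∞)) ^ m)⁻¹ := by
        rw [two_mul]
        exact add_le_add (padicHaar_ball_center_le c₁ m) (padicHaar_ball_center_le c₂ m)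

lemma final_num (k l m1 m2 m3 : ℕ) (h : 7 * k + l ≤ 6 * (m1 + m2 + m3)) :
    (2 * (((p : ℝ≥0∞)) ^ m3)⁻¹) * (2 * (((p : ℝ≥0∞)) ^ m2)⁻¹) * (2 * (((p : ℝ≥0∞)) ^ m1)⁻¹)
      ≤ 8 * (p : ℝ≥0∞) ^ (-(7 * (k : ℝ)) / 6) * (p : ℝ≥0∞) ^ (-(l : ℝ) / 6) := by
  have hp : p.Prime := Fact.out
  have hp0 : (p : ℝ≥0∞) ≠ 0 := by exact_mod_cast Nat.cast_ne_zero.2 hp.ne_zero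
  have hpt : (p : ℝ≥0∞) ≠ ⊤ := ENNReal.natCast_ne_top p
  have hp1 : (1 : ℝ≥0∞) ≤ (p : ℝ≥0∞) := by exact_mod_cast hp.one_lt.le
  have hinv : ∀ m : ℕ, (((p : ℝ≥0∞)) ^ m)⁻¹ = (p : ℝ≥0∞) ^ (-(m : ℝ)) := fun m => by
    rw [ENNReal.rpow_neg, ENNReal.rpow_natCast]
  rw [hinv, hinv, hinv]
  have hmul : (2 * (p : ℝ≥0∞) ^ (-(m3 : ℝ))) * (2 * (p : ℝ≥0∞) ^ (-(m2 : ℝ))) *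
      (2 * (p : ℝ≥0∞) ^ (-(m1 : ℝ)))
      = 8 * (p : ℝ≥0∞) ^ (-(m3 : ℝ) + -(m2 : ℝ) + -(m1 : ℝ)) := by
    rw [ENNReal.rpow_add _ _ hp0 hpt, ENNReal.rpow_add _ _ hp0 hpt]; ring
  have hrhs : 8 * (p : ℝ≥0∞) ^ (-(7 * (k : ℝ)) / 6) * (p : ℝ≥0∞) ^ (-(l : ℝ) / 6)
      = 8 * (p : ℝ≥0∞) ^ (-(7 * (k : ℝ)) / 6 + -(l : ℝ) / 6) := by
    rw [ENNReal.rpow_add _ _ hp0 hpt]; ring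
  rw [hmul, hrhs]
  refine mul_le_mul_right (ENNReal.rpow_le_rpow_of_exponent_le hp1 ?_) 8
  have h' : (7 * (k : ℝ) + l) ≤ 6 * ((m1 : ℝ) + m2 + m3) := by exact_mod_cast h
  linarith

end Stmt18Aux

open Stmt18Aux in
/-- For a prime `p` and `k, l, r ≥ 0`, the Haar volume `μ_p(k;l;r)` of the set of
`(x₂₁, x₃₁, x₃₂) ∈ ℤ_p³` satisfying
`p^k ∣ x₂₁² - x₂₁ p^l`, `p^k ∣ x₂₁(x₃₁ - x₃₂)`, `p^l ∣ x₃₂² - x₃₂ p^r`, and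
`p^{k+l} ∣ p^l (x₃₁² - x₃₁ p^r) - x₂₁ (x₃₂² - x₃₂ p^r)`
is at most `8 · p^{-7k/6} · p^{-l/6}`. -/
theorem stmt18 (p : ℕ) [Fact p.Prime] (k l r : ℕ) :
    ((padicHaar p).prod ((padicHaar p).prod (padicHaar p)))
      {v : ℤ_[p] × ℤ_[p] × ℤ_[p] |
        (p : ℤ_[p]) ^ k ∣ v.1 ^ 2 - v.1 * (p : ℤ_[p]) ^ l ∧
        (p : ℤ_[p]) ^ k ∣ v.1 * (v.2.1 - v.2.2) ∧
        (p : ℤ_[p]) ^ l ∣ v.2.2 ^ 2 - v.2.2 * (p : ℤ_[p]) ^ r ∧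
        (p : ℤ_[p]) ^ (k + l) ∣
          (p : ℤ_[p]) ^ l * (v.2.1 ^ 2 - v.2.1 * (p : ℤ_[p]) ^ r) -
            v.1 * (v.2.2 ^ 2 - v.2.2 * (p : ℤ_[p]) ^ r)}
      ≤ 8 * (p : ℝ≥0∞) ^ (-(7 * (k : ℝ)) / 6) * (p : ℝ≥0∞) ^ (-(l : ℝ) / 6) := by
  set m1 := max ((k + 1) / 2) (k - l) with hm1
  set m2 := (l + 1) / 2 with hm2
  set m3 := (k + 1) / 2 with hm3
  set μ := padicHaar p with hμdef
  set S := {v : ℤ_[p] × ℤ_[p] × ℤ_[p] |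
        (p : ℤ_[p]) ^ k ∣ v.1 ^ 2 - v.1 * (p : ℤ_[p]) ^ l ∧
        (p : ℤ_[p]) ^ k ∣ v.1 * (v.2.1 - v.2.2) ∧
        (p : ℤ_[p]) ^ l ∣ v.2.2 ^ 2 - v.2.2 * (p : ℤ_[p]) ^ r ∧
        (p : ℤ_[p]) ^ (k + l) ∣
          (p : ℤ_[p]) ^ l * (v.2.1 ^ 2 - v.2.1 * (p : ℤ_[p]) ^ r) -
            v.1 * (v.2.2 ^ 2 - v.2.2 * (p : ℤ_[p]) ^ r)} with hSdef
  have hS : MeasurableSet S := by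
    rw [hSdef]
    exact (measurableSet_dvd (by fun_prop) k).inter
      ((measurableSet_dvd (by fun_prop) k).inter
        ((measurableSet_dvd (by fun_prop) l).inter (measurableSet_dvd (by fun_prop) (k + l))))
  -- the A set and C set
  set Aset : Set ℤ_[p] := {x | (p : ℤ_[p]) ^ k ∣ x ^ 2 - x * (p : ℤ_[p]) ^ l} with hAdef
  have hAmeas : MeasurableSet Aset := measurableSet_dvd (by fun_prop) k
  have hAvol : μ Aset ≤ 2 * (((p : ℝ≥0∞)) ^ m1)⁻¹ := by
    refine two_ball 0 ((p : ℤ_[p]) ^ l) m1 Aset fun x hx => ?_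
    have hx' : (p : ℤ_[p]) ^ k ∣ x * (x - (p : ℤ_[p]) ^ l) := by
      have he : x ^ 2 - x * (p : ℤ_[p]) ^ l = x * (x - (p : ℤ_[p]) ^ l) := by ring
      have hx2 : (p : ℤ_[p]) ^ k ∣ x ^ 2 - x * (p : ℤ_[p]) ^ l := hx
      rwa [he] at hx2
    simpa [sub_zero] using claimA hx'
  set Cset : Set ℤ_[p] := {z | (p : ℤ_[p]) ^ l ∣ z ^ 2 - z * (p : ℤ_[p]) ^ r} with hCdef
  have hCmeas : MeasurableSet Cset := measurableSet_dvd (by fun_prop) l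
  have hCvol : μ Cset ≤ 2 * (((p : ℝ≥0∞)) ^ m2)⁻¹ := by
    refine two_ball 0 ((p : ℤ_[p]) ^ r) m2 Cset fun z hz => ?_
    have hz' : (p : ℤ_[p]) ^ l ∣ z * (z - (p : ℤ_[p]) ^ r) := by
      have he : z ^ 2 - z * (p : ℤ_[p]) ^ r = z * (z - (p : ℤ_[p]) ^ r) := by ring
      have hz2 : (p : ℤ_[p]) ^ l ∣ z ^ 2 - z * (p : ℤ_[p]) ^ r := hz
      rwa [he] at hz2
    simpa [sub_zero] using split_dvd hz' (i := m2) (j := m2) (by omega)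
  -- the y-section bound
  have hY : ∀ x z : ℤ_[p], μ {y : ℤ_[p] | (x, (y, z)) ∈ S}
      ≤ Set.indicator Cset (fun _ => 2 * (((p : ℝ≥0∞)) ^ m3)⁻¹) z := by
    intro x z
    by_cases hz : z ∈ Cset
    · rw [Set.indicator_of_mem hz]
      rcases Set.eq_empty_or_nonempty {y : ℤ_[p] | (x, (y, z)) ∈ S} with he | ⟨y₀, hy₀⟩
      · rw [he]; simp
      · refine two_ball y₀ ((p : ℤ_[p]) ^ r - y₀) m3 _ fun y hy => ?_
        rw [hSdef] at hy hy₀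
        obtain ⟨-, -, -, h4⟩ := hy
        obtain ⟨-, -, -, h40⟩ := hy₀
        have hdiff : (p : ℤ_[p]) ^ (k + l) ∣
            (p : ℤ_[p]) ^ l * ((y - y₀) * (y + y₀ - (p : ℤ_[p]) ^ r)) := by
          have h5 := dvd_sub h4 h40
          have heq : ((p : ℤ_[p]) ^ l * (y ^ 2 - y * (p : ℤ_[p]) ^ r) -
              x * (z ^ 2 - z * (p : ℤ_[p]) ^ r)) -
              ((p : ℤ_[p]) ^ l * (y₀ ^ 2 - y₀ * (p : ℤ_[p]) ^ r) -
              x * (z ^ 2 - z * (p : ℤ_[p]) ^ r))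
              = (p : ℤ_[p]) ^ l * ((y - y₀) * (y + y₀ - (p : ℤ_[p]) ^ r)) := by ring
          rwa [heq] at h5
        have hk' : (p : ℤ_[p]) ^ k ∣ (y - y₀) * (y + y₀ - (p : ℤ_[p]) ^ r) := by
          rw [pow_add, mul_comm ((p : ℤ_[p]) ^ k)] at hdiff
          exact (mul_dvd_mul_iff_left (pow_ne_zero l p_ne_zero)).1 hdiff
        rcases split_dvd hk' (i := m3) (j := m3) (by omega) with h | h
        · exact Or.inl h
        · refine Or.inr ?_
          have he2 : y - ((p : ℤ_[p]) ^ r - y₀) = y + y₀ - (p : ℤ_[p]) ^ r := by ring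
          rwa [he2]
    · rw [Set.indicator_of_notMem hz]
      have he : {y : ℤ_[p] | (x, (y, z)) ∈ S} = ∅ :=
        Set.eq_empty_iff_forall_notMem.2 fun y hy => hz (by rw [hSdef] at hy; exact hy.2.2.1)
      rw [he]; simp
  -- the x-section bound
  have hx_bound : ∀ x : ℤ_[p], (μ.prod μ) (Prod.mk x ⁻¹' S)
      ≤ Set.indicator Aset
        (fun _ => (2 * (((p : ℝ≥0∞)) ^ m3)⁻¹) * (2 * (((p : ℝ≥0∞)) ^ m2)⁻¹)) x := by
    intro x
    by_cases hx : x ∈ Aset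
    · rw [Set.indicator_of_mem hx]
      have hsect : MeasurableSet (Prod.mk x ⁻¹' S) := hS.preimage measurable_prodMk_left
      rw [Measure.prod_apply_symm hsect]
      calc ∫⁻ z, μ ((fun y => (y, z)) ⁻¹' (Prod.mk x ⁻¹' S)) ∂μ
          ≤ ∫⁻ z, Set.indicator Cset (fun _ => 2 * (((p : ℝ≥0∞)) ^ m3)⁻¹) z ∂μ :=
            lintegral_mono fun z => hY x z
        _ = (2 * (((p : ℝ≥0∞)) ^ m3)⁻¹) * μ Cset := lintegral_indicator_const hCmeas _
        _ ≤ (2 * (((p : ℝ≥0∞)) ^ m3)⁻¹) * (2 * (((p : ℝ≥0∞)) ^ m2)⁻¹) :=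
            mul_le_mul_right hCvol _
    · rw [Set.indicator_of_notMem hx]
      have he : Prod.mk x ⁻¹' S = ∅ :=
        Set.eq_empty_iff_forall_notMem.2 fun w hw => hx (by rw [hSdef] at hw; exact hw.1)
      rw [he]; simp
  calc (μ.prod (μ.prod μ)) S = ∫⁻ x, (μ.prod μ) (Prod.mk x ⁻¹' S) ∂μ := Measure.prod_apply hS
    _ ≤ ∫⁻ x, Set.indicator Aset
        (fun _ => (2 * (((p : ℝ≥0∞)) ^ m3)⁻¹) * (2 * (((p : ℝ≥0∞)) ^ m2)⁻¹)) x ∂μ :=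
        lintegral_mono hx_bound
    _ = (2 * (((p : ℝ≥0∞)) ^ m3)⁻¹) * (2 * (((p : ℝ≥0∞)) ^ m2)⁻¹) * μ Aset :=
        lintegral_indicator_const hAmeas _
    _ ≤ (2 * (((p : ℝ≥0∞)) ^ m3)⁻¹) * (2 * (((p : ℝ≥0∞)) ^ m2)⁻¹) * (2 * (((p : ℝ≥0∞)) ^ m1)⁻¹) :=
        mul_le_mul_right hAvol _
    _ ≤ 8 * (p : ℝ≥0∞) ^ (-(7 * (k : ℝ)) / 6) * (p : ℝ≥0∞) ^ (-(l : ℝ) / 6) :=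
        final_num k l m1 m2 m3 (by omega)
end
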